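/- Let P be the Petersen graph, let s and t be adjacent vertices of P, and let P' = P − {s,t}. For every neighbour l of s in P with l ≠ t and every neighbour r of t in P with r ≠ s, there exists a 2-colouring of V(P') such that: each colour class has exactly 4 vertices; every monochromatic component has at most 2 vertices; and among the four degree-2 vertices of P', exactly l and r receive colour 1. -/

import Mathlib

/-- Vertices of the Petersen graph: 2-element subsets of {1,...,5} (modelled as `Fin 5`). -/
abbrev PetersenVert : Type := {p : Finset (Fin 5) // p.card = 2}

/-- The Petersen graph as the Kneser graph K(5,2): two 2-subsets are adjacent iff disjoint. -/
def Petersen : SimpleGraph PetersenVert where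
  Adj a b := Disjoint a.1 b.1
  symm := ⟨fun _ _ h => Disjoint.symm h⟩
  loopless := ⟨by
    intro a h
    have ha : a.1 = ∅ := by simpa using disjoint_self.mp h
    have := a.2
    rw [ha] at this
    simp at this⟩

/-- The vertex set of `P' = P − {s, t}`. -/
def avoidSet (s t : PetersenVert) : Set PetersenVert := {v | v ≠ s ∧ v ≠ t}

/-- `P' = P − {s, t}`: the subgraph of the Petersen graph induced on the vertices
different from `s` and `t`. -/
def Pminus (s t : PetersenVert) : SimpleGraph (avoidSet s t) :=
  Petersen.induce (avoidSet s t)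

/-- `v` is one of the (four) vertices of degree 2 of `P' = P − {s, t}`. -/
def IsDeg2 (s t : PetersenVert) (v : avoidSet s t) : Prop :=
  ((Pminus s t).neighborSet v).ncard = 2

/-! ### Decidability instances -/

instance (a b : PetersenVert) : Decidable (Petersen.Adj a b) :=
  inferInstanceAs (Decidable (Disjoint a.1 b.1))

instance (s t : PetersenVert) : DecidablePred (· ∈ avoidSet s t) := fun v =>
  inferInstanceAs (Decidable (v ≠ s ∧ v ≠ t))

instance (s t : PetersenVert) (a b : avoidSet s t) : Decidable ((Pminus s t).Adj a b) :=
  inferInstanceAs (Decidable (Disjoint a.1.1 b.1.1))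

instance (s t : PetersenVert) : DecidableRel (Pminus s t).Adj := fun a b =>
  inferInstanceAs (Decidable (Disjoint a.1.1 b.1.1))

/-! ### Components of a matching are small -/

lemma matching_comp {V : Type*} {G : SimpleGraph V}
    (hM : ∀ u v w, G.Adj u v → G.Adj u w → v = w) (K : G.ConnectedComponent) :
    K.supp.ncard ≤ 2 := by
  obtain ⟨v, rfl⟩ := K.exists_rep
  show (G.connectedComponentMk v).supp.ncard ≤ 2
  have key : ∀ ⦃a b : V⦄ (_ : G.Walk a b), b = a ∨ G.Adj a b := by
    intro a b p
    induction p with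
    | nil => exact Or.inl rfl
    | cons h q ih =>
      rcases ih with rfl | hadj
      · exact Or.inr h
      · exact Or.inl (hM _ _ _ h.symm hadj).symm
  have hsub : (G.connectedComponentMk v).supp ⊆ insert v {w | G.Adj v w} := by
    intro w hw
    have hmk : G.connectedComponentMk w = G.connectedComponentMk v :=
      (SimpleGraph.ConnectedComponent.mem_supp_iff _ _).1 hw
    have hreach : G.Reachable v w := (SimpleGraph.ConnectedComponent.eq.mp hmk).symm
    obtain ⟨p⟩ := hreach
    rcases key p with rfl | h
    · exact Set.mem_insert _ _
    · exact Set.mem_insert_of_mem _ h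
  have hss : ({w | G.Adj v w} : Set V).Subsingleton := fun x hx y hy => hM v x y hx hy
  have hfin : ({w | G.Adj v w} : Set V).Finite := hss.finite
  have h1 := Set.ncard_le_ncard hsub (hfin.insert v)
  have h2 := Set.ncard_insert_le v {w | G.Adj v w}
  have h3 : ({w | G.Adj v w} : Set V).ncard ≤ 1 := by
    rcases hss.eq_empty_or_singleton with h | ⟨a, h⟩ <;> simp [h]
  omega

/-! ### The base configuration -/

def s0 : PetersenVert := ⟨{0,1}, by decide⟩
def t0 : PetersenVert := ⟨{2,3}, by decide⟩
def l0 : PetersenVert := ⟨{2,4}, by decide⟩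
def l0' : PetersenVert := ⟨{3,4}, by decide⟩
def r0 : PetersenVert := ⟨{0,4}, by decide⟩
def r0' : PetersenVert := ⟨{1,4}, by decide⟩

set_option maxRecDepth 100000 in
set_option maxHeartbeats 4000000 in
lemma pairE : ∀ s t : PetersenVert, Petersen.Adj s t →
    ∃ a b c d x : Fin 5, [a,b,c,d,x].Nodup ∧ s.1 = {a,b} ∧ t.1 = {c,d} := by
  decide

set_option maxRecDepth 10000 in
lemma lcases : ∀ x : PetersenVert, Petersen.Adj s0 x → x ≠ t0 → x = l0 ∨ x = l0' := by decide

set_option maxRecDepth 10000 in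
lemma rcases' : ∀ x : PetersenVert, Petersen.Adj t0 x → x ≠ s0 → x = r0 ∨ x = r0' := by decide

/-- The explicit colouring used in the base case. -/
def cF (A : Fin 5) (L : Finset (Fin 5)) : avoidSet s0 t0 → Fin 2 :=
  fun v => if A ∈ v.1.1 ∨ v.1.1 = L then 0 else 1

set_option maxRecDepth 10000 in
lemma concrete (l r : PetersenVert) (h1 : Petersen.Adj s0 l) (h2 : l ≠ t0)
    (h3 : Petersen.Adj t0 r) (h4 : r ≠ s0) :
    ∃ c₀ : avoidSet s0 t0 → Fin 2,
      Nat.card {v : avoidSet s0 t0 | c₀ v = 0} = 4 ∧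
      Nat.card {v : avoidSet s0 t0 | c₀ v = 1} = 4 ∧
      (∀ u v w : avoidSet s0 t0, c₀ u = c₀ v → c₀ u = c₀ w →
        (Pminus s0 t0).Adj u v → (Pminus s0 t0).Adj u w → v = w) ∧
      (∀ v : avoidSet s0 t0, Nat.card ((Pminus s0 t0).neighborSet v) = 2 →
        (c₀ v = 0 ↔ (v : PetersenVert) = l ∨ (v : PetersenVert) = r)) := by
  rcases lcases l h1 h2 with rfl | rfl <;> rcases rcases' r h3 h4 with rfl | rfl
  · exact ⟨cF 0 {2,4}, by rw [Nat.card_eq_fintype_card]; decide,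
      by rw [Nat.card_eq_fintype_card]; decide, by decide,
      by simp only [Nat.card_eq_fintype_card]; decide⟩
  · exact ⟨cF 1 {2,4}, by rw [Nat.card_eq_fintype_card]; decide,
      by rw [Nat.card_eq_fintype_card]; decide, by decide,
      by simp only [Nat.card_eq_fintype_card]; decide⟩
  · exact ⟨cF 0 {3,4}, by rw [Nat.card_eq_fintype_card]; decide,
      by rw [Nat.card_eq_fintype_card]; decide, by decide,
      by simp only [Nat.card_eq_fintype_card]; decide⟩
  · exact ⟨cF 1 {3,4}, by rw [Nat.card_eq_fintype_card]; decide,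
      by rw [Nat.card_eq_fintype_card]; decide, by decide,
      by simp only [Nat.card_eq_fintype_card]; decide⟩

/-- Let `s, t` be adjacent vertices of the Petersen graph and `P' = P − {s,t}`.  For every
neighbour `l` of `s` with `l ≠ t` and every neighbour `r` of `t` with `r ≠ s`, there is a
2-colouring of `V(P')` (colour 1 is the value `0 : Fin 2`, colour 2 the value `1`) such
that each colour class has exactly 4 vertices, every monochromatic component has at most
2 vertices, and among the four degree-2 vertices of `P'` exactly `l` and `r` get colour 1. -/
theorem balanced_colouring_exists (s t : PetersenVert) (hst : Petersen.Adj s t)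
    (l r : PetersenVert) (hsl : Petersen.Adj s l) (hlt : l ≠ t)
    (htr : Petersen.Adj t r) (hrs : r ≠ s) :
    ∃ c : avoidSet s t → Fin 2,
      {v : avoidSet s t | c v = 0}.ncard = 4 ∧
      {v : avoidSet s t | c v = 1}.ncard = 4 ∧
      (∀ i : Fin 2,
        ∀ K : ((Pminus s t).induce {v | c v = i}).ConnectedComponent, K.supp.ncard ≤ 2) ∧
      (∀ v : avoidSet s t, IsDeg2 s t v →
        (c v = 0 ↔ ((v : PetersenVert) = l ∨ (v : PetersenVert) = r))) := by
  obtain ⟨a, b, cc, d, x, hnd, hs, ht⟩ := pairE s t hst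
  simp only [List.nodup_cons, List.mem_cons, List.mem_singleton, List.not_mem_nil,
    or_false, not_or, List.nodup_nil, and_true] at hnd
  set f : Fin 5 → Fin 5 := ![a, b, cc, d, x] with hf
  have hinj : Function.Injective f := by
    intro i j hij
    fin_cases i <;> fin_cases j <;> simp_all [hf] <;> tauto
  set g : Fin 5 ↪ Fin 5 := ⟨f, hinj⟩ with hg
  have hFinj : Function.Injective (fun p : PetersenVert =>
      (⟨p.1.map g, by rw [Finset.card_map]; exact p.2⟩ : PetersenVert)) := by
    intro p q h
    exact Subtype.ext (Finset.map_injective g (congrArg Subtype.val h))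
  set Φ : PetersenVert ≃ PetersenVert :=
    Equiv.ofBijective _ (Finite.injective_iff_bijective.mp hFinj) with hΦ
  have hΦapp : ∀ p : PetersenVert, (Φ p).1 = p.1.map g := fun p => rfl
  have hΦs : Φ s0 = s := by
    apply Subtype.ext
    rw [hΦapp, hs]
    show ({0,1} : Finset (Fin 5)).map g = {a, b}
    simp [hg, hf]
  have hΦt : Φ t0 = t := by
    apply Subtype.ext
    rw [hΦapp, ht]
    show ({2,3} : Finset (Fin 5)).map g = {cc, d}
    simp [hg, hf]
  have hadj : ∀ p q : PetersenVert, Petersen.Adj (Φ p) (Φ q) ↔ Petersen.Adj p q := by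
    intro p q
    show Disjoint (p.1.map g) (q.1.map g) ↔ Disjoint p.1 q.1
    exact Finset.disjoint_map g
  have hmem : ∀ p : PetersenVert, p ∈ avoidSet s0 t0 ↔ Φ p ∈ avoidSet s t := by
    intro p
    show (p ≠ s0 ∧ p ≠ t0) ↔ (Φ p ≠ s ∧ Φ p ≠ t)
    rw [← hΦs, ← hΦt, Φ.injective.ne_iff, Φ.injective.ne_iff]
  set e : (avoidSet s0 t0) ≃ (avoidSet s t) := Equiv.subtypeEquiv Φ hmem with he
  have heapp : ∀ u : avoidSet s0 t0, ((e u : avoidSet s t) : PetersenVert) = Φ u.1 :=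
    fun u => rfl
  have heAdj : ∀ u v : avoidSet s0 t0,
      (Pminus s0 t0).Adj u v ↔ (Pminus s t).Adj (e u) (e v) := by
    intro u v
    show Petersen.Adj u.1 v.1 ↔ Petersen.Adj (e u).1 (e v).1
    rw [heapp, heapp, hadj]
  have heAdj' : ∀ u v : avoidSet s t,
      (Pminus s t).Adj u v ↔ (Pminus s0 t0).Adj (e.symm u) (e.symm v) := by
    intro u v
    rw [heAdj (e.symm u) (e.symm v), Equiv.apply_symm_apply, Equiv.apply_symm_apply]
  -- the images of l and r
  have hls : l ≠ s := hsl.ne.symm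
  have hrt : r ≠ t := htr.ne.symm
  set lv : avoidSet s t := ⟨l, hls, hlt⟩ with hlv
  set rv : avoidSet s t := ⟨r, hrs, hrt⟩ with hrv
  set l' : avoidSet s0 t0 := e.symm lv with hl'
  set r' : avoidSet s0 t0 := e.symm rv with hr'
  have hΦl : Φ l'.1 = l := by
    have h1 : e l' = lv := by rw [hl', Equiv.apply_symm_apply]
    exact congrArg Subtype.val h1
  have hΦr : Φ r'.1 = r := by
    have h1 : e r' = rv := by rw [hr', Equiv.apply_symm_apply]
    exact congrArg Subtype.val h1
  have hc1 : Petersen.Adj s0 l'.1 := by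
    rw [← hadj, hΦs, hΦl]; exact hsl
  have hc2 : (l' : PetersenVert) ≠ t0 := l'.2.2
  have hc3 : Petersen.Adj t0 r'.1 := by
    rw [← hadj, hΦt, hΦr]; exact htr
  have hc4 : (r' : PetersenVert) ≠ s0 := r'.2.1
  obtain ⟨c₀, hcard0, hcard1, hmatch, hdeg⟩ := concrete l'.1 r'.1 hc1 hc2 hc3 hc4
  refine ⟨fun v => c₀ (e.symm v), ?_, ?_, ?_, ?_⟩
  · rw [← Nat.card_coe_set_eq, ← hcard0]
    exact Nat.card_congr (Equiv.subtypeEquiv e.symm (fun v => Iff.rfl))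
  · rw [← Nat.card_coe_set_eq, ← hcard1]
    exact Nat.card_congr (Equiv.subtypeEquiv e.symm (fun v => Iff.rfl))
  · intro i K
    apply matching_comp (fun u v w h1 h2 => ?_) K
    have m1 : c₀ (e.symm u.1) = c₀ (e.symm v.1) := u.2.trans v.2.symm
    have m2 : c₀ (e.symm u.1) = c₀ (e.symm w.1) := u.2.trans w.2.symm
    have a1 : (Pminus s t).Adj u.1 v.1 := h1
    have a2 : (Pminus s t).Adj u.1 w.1 := h2
    have := hmatch (e.symm u.1) (e.symm v.1) (e.symm w.1) m1 m2
      ((heAdj' _ _).mp a1) ((heAdj' _ _).mp a2)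
    exact Subtype.ext (e.symm.injective this)
  · intro v hv
    rw [IsDeg2, ← Nat.card_coe_set_eq] at hv
    have hnb : ∀ w : avoidSet s t, w ∈ (Pminus s t).neighborSet v ↔
        e.symm w ∈ (Pminus s0 t0).neighborSet (e.symm v) := by
      intro w
      show (Pminus s t).Adj v w ↔ (Pminus s0 t0).Adj (e.symm v) (e.symm w)
      exact heAdj' v w
    have hcardnb : Nat.card ((Pminus s0 t0).neighborSet (e.symm v)) = 2 := by
      rw [← hv]
      exact (Nat.card_congr (Equiv.subtypeEquiv e.symm hnb)).symm
    have := hdeg (e.symm v) hcardnb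
    rw [this]
    constructor
    · rintro (h | h)
      · left
        have h2 : e.symm v = e.symm lv := Subtype.ext h
        exact congrArg Subtype.val (e.symm.injective h2)
      · right
        have h2 : e.symm v = e.symm rv := Subtype.ext h
        exact congrArg Subtype.val (e.symm.injective h2)
    · rintro (h | h)
      · left
        have hvl : v = lv := Subtype.ext h
        exact congrArg Subtype.val (congrArg e.symm hvl)
      · right
        have hvr : v = rv := Subtype.ext h
        exact congrArg Subtype.val (congrArg e.symm hvr)
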